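/- For real symmetric d×d matrices X and Z, |tr(XZ)| ≤ √d · ‖X∘Z‖_F, where X∘Z := (XZ+ZX)/2. In particular, if a sequence satisfies X_k∘Z_k → 0 in Frobenius norm, then tr(X_k Z_k) → 0; hence the CAKKT complementarity condition implies the TAKKT complementarity condition. -/

import Mathlib

open Matrix BigOperators Filter

/-- Frobenius norm of a real matrix. -/
noncomputable def frobNorm {d : ℕ} (A : Matrix (Fin d) (Fin d) ℝ) : ℝ :=
  Real.sqrt (Matrix.trace (Aᵀ * A))

/-- Eigenvalues of a Hermitian (real symmetric) matrix, sorted in ascending order. -/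
noncomputable def sortedEig {d : ℕ} {A : Matrix (Fin d) (Fin d) ℝ} (hA : A.IsHermitian) :
    Fin d → ℝ :=
  hA.eigenvalues ∘ Tuple.sort hA.eigenvalues

/-- Projection of a symmetric matrix onto the PSD cone: zero out negative eigenvalues in
a spectral decomposition. -/
noncomputable def psdProj {d : ℕ} {A : Matrix (Fin d) (Fin d) ℝ} (hA : A.IsHermitian) :
    Matrix (Fin d) (Fin d) ℝ :=
  (hA.eigenvectorUnitary : Matrix (Fin d) (Fin d) ℝ) *
    Matrix.diagonal (fun i => max (hA.eigenvalues i) 0) *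
    star (hA.eigenvectorUnitary : Matrix (Fin d) (Fin d) ℝ)

lemma abs_trace_le_frob {d : ℕ} (M : Matrix (Fin d) (Fin d) ℝ) :
    |Matrix.trace M| ≤ Real.sqrt d * frobNorm M := by
  have hT : Matrix.trace (Mᵀ * M) = ∑ i, ∑ j, (M j i) ^ 2 := by
    simp [Matrix.trace, Matrix.mul_apply, Matrix.diag, sq]
  have hdiag : ∑ i, (M i i) ^ 2 ≤ ∑ i, ∑ j, (M j i) ^ 2 := by
    apply Finset.sum_le_sum
    intro i _
    exact Finset.single_le_sum (f := fun j => (M j i) ^ 2)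
      (fun j _ => sq_nonneg _) (Finset.mem_univ i)
  have h1 : (Matrix.trace M) ^ 2 ≤ (d : ℝ) * Matrix.trace (Mᵀ * M) := by
    have := sq_sum_le_card_mul_sum_sq (s := (Finset.univ : Finset (Fin d)))
      (f := fun i => M i i)
    simp only [Finset.card_univ, Fintype.card_fin] at this
    calc (Matrix.trace M) ^ 2 = (∑ i, M i i) ^ 2 := by simp [Matrix.trace, Matrix.diag]
      _ ≤ (d : ℝ) * ∑ i, (M i i) ^ 2 := by exact_mod_cast this
      _ ≤ (d : ℝ) * Matrix.trace (Mᵀ * M) := by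
          rw [hT]; exact mul_le_mul_of_nonneg_left hdiag (Nat.cast_nonneg d)
  have habs : |Matrix.trace M| = Real.sqrt ((Matrix.trace M) ^ 2) := by
    rw [Real.sqrt_sq_eq_abs]
  rw [habs, frobNorm, ← Real.sqrt_mul (Nat.cast_nonneg d)]
  exact Real.sqrt_le_sqrt h1

lemma trace_eq_jordan {d : ℕ} (X Z : Matrix (Fin d) (Fin d) ℝ) :
    Matrix.trace (X * Z) = Matrix.trace ((1 / 2 : ℝ) • (X * Z + Z * X)) := by
  rw [Matrix.trace_smul, Matrix.trace_add, Matrix.trace_mul_comm Z X]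
  ring_nf

/-- `|tr(XZ)| ≤ √d ‖X∘Z‖_F`, and hence `X_k∘Z_k → 0` implies `tr(X_k Z_k) → 0`. -/
theorem stmt4 {d : ℕ} :
    (∀ X Z : Matrix (Fin d) (Fin d) ℝ, Xᵀ = X → Zᵀ = Z →
      |Matrix.trace (X * Z)| ≤ Real.sqrt d * frobNorm ((1 / 2 : ℝ) • (X * Z + Z * X))) ∧
    (∀ Xs Zs : ℕ → Matrix (Fin d) (Fin d) ℝ,
      (∀ k, (Xs k)ᵀ = Xs k) → (∀ k, (Zs k)ᵀ = Zs k) →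
      Filter.Tendsto (fun k => frobNorm ((1 / 2 : ℝ) • (Xs k * Zs k + Zs k * Xs k)))
        Filter.atTop (nhds 0) →
      Filter.Tendsto (fun k => Matrix.trace (Xs k * Zs k)) Filter.atTop (nhds 0)) := by
  have key : ∀ X Z : Matrix (Fin d) (Fin d) ℝ,
      |Matrix.trace (X * Z)| ≤ Real.sqrt d * frobNorm ((1 / 2 : ℝ) • (X * Z + Z * X)) := by
    intro X Z
    rw [trace_eq_jordan]
    exact abs_trace_le_frob _
  refine ⟨fun X Z _ _ => key X Z, fun Xs Zs _ _ h => ?_⟩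
  have h2 : Tendsto (fun k => Real.sqrt d *
      frobNorm ((1 / 2 : ℝ) • (Xs k * Zs k + Zs k * Xs k))) atTop (nhds 0) := by
    simpa using h.const_mul (Real.sqrt d)
  exact squeeze_zero_norm (fun k => key (Xs k) (Zs k)) h2
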